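/- Let A be a self-adjoint unitary on H_A, B a self-adjoint unitary on H_B, and ψ ∈ H_A ⊗ H_B a unit vector with ⟨ψ, (A ⊗ B)ψ⟩ = 1. Let S = Supp_A(ψ) be the A-support of ψ. Then A maps S into S and also maps the orthogonal complement of S into itself. -/

import Mathlib

open scoped Matrix


open Kronecker

/-- Action of a matrix on a Euclidean-space vector. -/
noncomputable def act {ι κ : Type*} [Fintype ι] (M : Matrix κ ι ℂ) (x : EuclideanSpace ℂ ι) :
    EuclideanSpace ℂ κ := WithLp.toLp 2 (fun k => ∑ j, M k j * x j)

/-- Elementary tensor of two Euclidean-space vectors. -/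
noncomputable def tp {ι κ : Type*} (v : EuclideanSpace ℂ ι) (w : EuclideanSpace ℂ κ) :
    EuclideanSpace ℂ (ι × κ) := WithLp.toLp 2 (fun p : ι × κ => v p.1 * w p.2)

set_option linter.unusedSectionVars false


section aux
variable {ι κ τ : Type*} [Fintype ι] [Fintype κ] [Fintype τ]

lemma es_apply_sum {s : Finset τ} (f : τ → EuclideanSpace ℂ ι) (k : ι) :
    (∑ i ∈ s, f i) k = ∑ i ∈ s, f i k := by
  induction s using Finset.cons_induction with
  | empty => rfl
  | cons a s ha ih => rw [Finset.sum_cons, Finset.sum_cons, ← ih]; rfl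

lemma es_apply_smul (c : ℂ) (x : EuclideanSpace ℂ ι) (k : ι) : (c • x) k = c * x k := rfl

lemma act_smul (M : Matrix κ ι ℂ) (c : ℂ) (x : EuclideanSpace ℂ ι) :
    act M (c • x) = c • act M x := by
  ext k
  simp only [PiLp.toLp_apply, act, es_apply_smul, Finset.mul_sum]
  exact Finset.sum_congr rfl fun j _ => by ring

lemma act_add (M : Matrix κ ι ℂ) (x y : EuclideanSpace ℂ ι) :
    act M (x + y) = act M x + act M y := by
  ext k
  show ∑ j, M k j * (x j + y j) = (∑ j, M k j * x j) + ∑ j, M k j * y j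
  rw [← Finset.sum_add_distrib]
  exact Finset.sum_congr rfl fun j _ => by ring

lemma act_zero (M : Matrix κ ι ℂ) : act M (0 : EuclideanSpace ℂ ι) = 0 := by
  ext k
  show ∑ j, M k j * (0 : ℂ) = 0
  simp

lemma act_sum (M : Matrix κ ι ℂ) {s : Finset τ} (f : τ → EuclideanSpace ℂ ι) :
    act M (∑ i ∈ s, f i) = ∑ i ∈ s, act M (f i) := by
  ext k
  simp only [PiLp.toLp_apply, act, es_apply_sum, Finset.mul_sum]
  rw [Finset.sum_comm]

lemma act_act (M : Matrix κ ι ℂ) (N : Matrix ι τ ℂ) (x : EuclideanSpace ℂ τ) :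
    act (M * N) x = act M (act N x) := by
  ext k
  simp [PiLp.toLp_apply, act, Matrix.mul_apply, Finset.sum_mul, Finset.mul_sum]
  rw [Finset.sum_comm]
  exact Finset.sum_congr rfl fun j _ => Finset.sum_congr rfl fun i _ => by ring

lemma act_one [DecidableEq ι] (x : EuclideanSpace ℂ ι) : act 1 x = x := by
  ext k
  simp [PiLp.toLp_apply, act, Matrix.one_apply, Finset.sum_ite_eq]

lemma inner_act (M : Matrix κ ι ℂ) (x : EuclideanSpace ℂ ι) (y : EuclideanSpace ℂ κ) :
    (inner ℂ (act M x) y : ℂ) = inner ℂ x (act Mᴴ y) := by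
  simp only [PiLp.toLp_apply, PiLp.inner_apply, RCLike.inner_apply, act, Matrix.conjTranspose_apply,
    map_sum, map_mul, Finset.mul_sum, Finset.sum_mul]
  rw [Finset.sum_comm]
  exact Finset.sum_congr rfl fun j _ => Finset.sum_congr rfl fun i _ => by
    rw [starRingEnd_apply]; ring

lemma inner_act' (M : Matrix κ ι ℂ) (x : EuclideanSpace ℂ ι) (y : EuclideanSpace ℂ κ) :
    (inner ℂ y (act M x) : ℂ) = inner ℂ (act Mᴴ y) x := by
  rw [inner_act, Matrix.conjTranspose_conjTranspose]

lemma act_kron_tp (M : Matrix ι ι ℂ) (N : Matrix κ κ ℂ) (a : EuclideanSpace ℂ ι)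
    (b : EuclideanSpace ℂ κ) : act (M ⊗ₖ N) (tp a b) = tp (act M a) (act N b) := by
  ext p
  simp only [PiLp.toLp_apply, act, tp, Matrix.kroneckerMap_apply, Fintype.sum_prod_type]
  rw [Finset.sum_mul_sum]
  exact Finset.sum_congr rfl fun i _ => Finset.sum_congr rfl fun j _ => by ring

lemma kron_conjTranspose (M : Matrix ι ι ℂ) (N : Matrix κ κ ℂ) :
    (M ⊗ₖ N)ᴴ = Mᴴ ⊗ₖ Nᴴ := by
  ext p q
  simp [Matrix.conjTranspose_apply, Matrix.kroneckerMap_apply]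

/-- partial inner product over the second factor -/
noncomputable def pin (y : EuclideanSpace ℂ κ) (z : EuclideanSpace ℂ (ι × κ)) :
    EuclideanSpace ℂ ι := WithLp.toLp 2 (fun a => ∑ b, (starRingEnd ℂ) (y b) * z (a, b))

lemma pin_smul (y : EuclideanSpace ℂ κ) (c : ℂ) (z : EuclideanSpace ℂ (ι × κ)) :
    pin y (c • z) = c • pin y z := by
  ext a
  simp only [PiLp.toLp_apply, pin, es_apply_smul, Finset.mul_sum]
  exact Finset.sum_congr rfl fun b _ => by ring

lemma pin_sum (y : EuclideanSpace ℂ κ) {s : Finset τ} (f : τ → EuclideanSpace ℂ (ι × κ)) :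
    pin y (∑ i ∈ s, f i) = ∑ i ∈ s, pin y (f i) := by
  ext a
  simp only [PiLp.toLp_apply, pin, es_apply_sum, Finset.mul_sum]
  rw [Finset.sum_comm]

lemma pin_tp (y : EuclideanSpace ℂ κ) (a : EuclideanSpace ℂ ι) (b : EuclideanSpace ℂ κ) :
    pin y (tp a b) = (inner ℂ y b : ℂ) • a := by
  ext i
  simp only [PiLp.toLp_apply, pin, tp, es_apply_smul, PiLp.inner_apply, RCLike.inner_apply, Finset.sum_mul]
  exact Finset.sum_congr rfl fun j _ => by ring

end aux


/-- for self-adjoint unitaries `A`, `B` and a unit vector `ψ` with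
`⟨ψ, (A ⊗ B)ψ⟩ = 1`, the operator `A` maps `S = Supp_A(ψ)` (the span of the A-side Schmidt
vectors) into `S`, and maps `Sᗮ` into `Sᗮ`. -/
theorem stmt2 {m n : ℕ} (A : Matrix (Fin m) (Fin m) ℂ) (B : Matrix (Fin n) (Fin n) ℂ)
    (hA : A.IsHermitian) (hA2 : A * A = 1)
    (hB : B.IsHermitian) (hB2 : B * B = 1)
    {ι : Type*} [Fintype ι] (lam : ι → ℝ) (hlam : ∀ i, 0 < lam i)
    (v : ι → EuclideanSpace ℂ (Fin m)) (w : ι → EuclideanSpace ℂ (Fin n))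
    (hv : Orthonormal ℂ v) (hw : Orthonormal ℂ w)
    (ψ : EuclideanSpace ℂ (Fin m × Fin n))
    (hψ : ψ = ∑ i, (lam i : ℂ) • tp (v i) (w i))
    (hunit : ‖ψ‖ = 1)
    (h : (inner ℂ ψ (act (A ⊗ₖ B) ψ) : ℂ) = 1) :
    (∀ x ∈ Submodule.span ℂ (Set.range v), act A x ∈ Submodule.span ℂ (Set.range v)) ∧
    (∀ x ∈ (Submodule.span ℂ (Set.range v))ᗮ, act A x ∈ (Submodule.span ℂ (Set.range v))ᗮ) := by
  classical
  set K := A ⊗ₖ B with hK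
  -- K is an isometry
  have hKK : Kᴴ * K = 1 := by
    rw [hK, kron_conjTranspose, hA.eq, hB.eq, ← Matrix.mul_kronecker_mul, hA2, hB2,
      Matrix.one_kronecker_one]
  have hiso : (inner ℂ (act K ψ) (act K ψ) : ℂ) = inner ℂ ψ ψ := by
    rw [inner_act, ← act_act, hKK, act_one]
  have hnorm : ‖act K ψ‖ = 1 := by
    rw [@norm_eq_sqrt_re_inner ℂ, hiso, ← @norm_eq_sqrt_re_inner ℂ, hunit]
  -- equality case: (A ⊗ B) ψ = ψ
  have hfix : ψ = act K ψ := (inner_eq_one_iff_of_norm_eq_one hunit hnorm).mp h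
  -- expand
  have hexp : (∑ i, (lam i : ℂ) • tp (v i) (w i))
      = ∑ i, (lam i : ℂ) • tp (act A (v i)) (act B (w i)) := by
    calc (∑ i, (lam i : ℂ) • tp (v i) (w i)) = ψ := hψ.symm
    _ = act K ψ := hfix
    _ = ∑ i, (lam i : ℂ) • tp (act A (v i)) (act B (w i)) := by
        rw [hψ, act_sum]
        exact Finset.sum_congr rfl fun i _ => by rw [act_smul, hK, act_kron_tp]
  -- inner products of the B-side images
  have hBw : ∀ k i, (inner ℂ (act B (w k)) (act B (w i)) : ℂ) = if k = i then 1 else 0 := by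
    intro k i
    rw [inner_act, ← act_act, hB.eq, hB2, act_one]
    exact orthonormal_iff_ite.mp hw k i
  -- A maps each v k into the span
  have hAv : ∀ k, act A (v k) ∈ Submodule.span ℂ (Set.range v) := by
    intro k
    have hpin := congrArg (pin (act B (w k))) hexp
    rw [pin_sum, pin_sum] at hpin
    simp only [pin_smul, pin_tp] at hpin
    have hL : ∑ i, (lam i : ℂ) • ((inner ℂ (act B (w k)) (act B (w i)) : ℂ) • act A (v i))
        = (lam k : ℂ) • act A (v k) := by
      rw [Finset.sum_eq_single k]
      · rw [hBw k k, if_pos rfl, one_smul]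
      · intro i _ hik
        rw [hBw k i, if_neg (Ne.symm hik), zero_smul, smul_zero]
      · intro hk; exact absurd (Finset.mem_univ k) hk
    rw [hL] at hpin
    have hlamk : (lam k : ℂ) ≠ 0 := by
      exact_mod_cast Complex.ofReal_ne_zero.mpr (ne_of_gt (hlam k))
    have : act A (v k) = (lam k : ℂ)⁻¹ •
        ∑ i, (lam i : ℂ) • ((inner ℂ (act B (w k)) (w i) : ℂ) • v i) := by
      rw [hpin, inv_smul_smul₀ hlamk]
    rw [this]
    refine Submodule.smul_mem _ _ (Submodule.sum_mem _ fun i _ => ?_)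
    exact Submodule.smul_mem _ _ (Submodule.smul_mem _ _
      (Submodule.subset_span ⟨i, rfl⟩))
  constructor
  · intro x hx
    induction hx using Submodule.span_induction with
    | mem y hy => obtain ⟨i, rfl⟩ := hy; exact hAv i
    | zero => rw [act_zero]; exact Submodule.zero_mem _
    | add y z _ _ hy hz => rw [act_add]; exact Submodule.add_mem _ hy hz
    | smul c y _ hy => rw [act_smul]; exact Submodule.smul_mem _ _ hy
  · intro x hx
    rw [Submodule.mem_orthogonal]
    intro u hu
    induction hu using Submodule.span_induction with
    | mem y hy =>
        obtain ⟨i, rfl⟩ := hy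
        rw [inner_act', hA.eq]
        exact (Submodule.mem_orthogonal _ x).mp hx _ (hAv i)
    | zero => rw [inner_zero_left]
    | add y z _ _ hy hz => rw [inner_add_left, hy, hz, add_zero]
    | smul c y _ hy => rw [inner_smul_left, hy, mul_zero]
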